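/- Fix a>0 and θ>0. There exists a constant C>0, depending only on a, θ and the doubling constant c_d, such that for every z₀=(x₀,t₀)∈S and every r>0 with B̂(z₀,(1+θ)r) ⊆ S, and for every nonnegative Radon measure μ supported in the closure of B̂(z₀,r) satisfying ∫ G_a(z,ζ) dμ(ζ) ≤ 1 for all z∈S, one has μ(closure of B̂(z₀,r)) ≤ C·|B(x₀,r)|. In particular, C_a(closure of B̂(z₀,r)) ≤ C·|B(x₀,r)|. -/

import Mathlib

open MeasureTheory Set
open scoped ENNReal NNReal

noncomputable section

/-- ℝ^N with Euclidean structure and Lebesgue measure. -/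
abbrev Vec (N : ℕ) := EuclideanSpace ℝ (Fin N)

/-- The `d`-ball `B(x,r) = {y : d(x,y) < r}`. -/
def dBall {N : ℕ} (d : Vec N → Vec N → ℝ) (x : Vec N) (r : ℝ) : Set (Vec N) :=
  {y | d x y < r}

/-- Lebesgue measure is doubling with respect to `d`, with doubling constant `cd`. -/
def Doubling {N : ℕ} (d : Vec N → Vec N → ℝ) (cd : ℝ) : Prop :=
  ∀ (x : Vec N) (r : ℝ), 0 < r →
    volume (dBall d x (2 * r)) ≤ ENNReal.ofReal cd * volume (dBall d x r)

/-- `d` is a metric on ℝ^N inducing the Euclidean topology (with bounded `d`-balls,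
as in assumption (D1) of the paper). -/
structure GoodMetric {N : ℕ} (d : Vec N → Vec N → ℝ) : Prop where
  nonneg : ∀ x y, 0 ≤ d x y
  eq_zero_iff : ∀ x y, d x y = 0 ↔ x = y
  symm : ∀ x y, d x y = d y x
  triangle : ∀ x y z, d x z ≤ d x y + d y z
  cont : Continuous fun p : Vec N × Vec N => d p.1 p.2
  finer : ∀ (x : Vec N) (ε : ℝ), 0 < ε → ∃ δ > 0, ∀ y, d x y < δ → dist x y < ε
  bounded : ∀ (x : Vec N) (r : ℝ), Bornology.IsBounded (dBall d x r)

/-- The strip `S = ℝ^N × (T₁,T₂)`. -/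
def strip (N : ℕ) (T₁ T₂ : EReal) : Set (Vec N × ℝ) :=
  {z | T₁ < (z.2 : EReal) ∧ (z.2 : EReal) < T₂}

/-- The `d`-Gaussian kernel of exponent `a`. -/
def gaussK {N : ℕ} (d : Vec N → Vec N → ℝ) (a : ℝ) (z ζ : Vec N × ℝ) : ℝ≥0∞ :=
  if ζ.2 < z.2 then
    (volume (dBall d z.1 (Real.sqrt (z.2 - ζ.2))))⁻¹ *
      ENNReal.ofReal (Real.exp (-a * d z.1 ζ.1 ^ 2 / (z.2 - ζ.2)))
  else 0

/-- Capacity of `F` with respect to the kernel `K`: supremum of total masses of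
nonnegative Radon measures supported in `F` whose `K`-potential is `≤ 1` on `X`. -/
def capac {α : Type*} [TopologicalSpace α] [MeasurableSpace α]
    (X : Set α) (K : α → α → ℝ≥0∞) (F : Set α) : ℝ≥0∞ :=
  ⨆ (μ : Measure α) (_ : μ.InnerRegular ∧ IsLocallyFiniteMeasure μ ∧ μ Fᶜ = 0 ∧
      ∀ z ∈ X, ∫⁻ ζ, K z ζ ∂μ ≤ 1), μ F

/-- The parabolic counterpart `d̂` of `d`. -/
def pdist {N : ℕ} (d : Vec N → Vec N → ℝ) (z ζ : Vec N × ℝ) : ℝ :=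
  (d z.1 ζ.1 ^ 4 + (z.2 - ζ.2) ^ 2) ^ (1 / 4 : ℝ)

/-- The parabolic ball `B̂(z,r)` (as a subset of ℝ^{N+1}). -/
def pBall {N : ℕ} (d : Vec N → Vec N → ℝ) (z : Vec N × ℝ) (r : ℝ) : Set (Vec N × ℝ) :=
  {ζ | pdist d z ζ < r}

/-- The ring-shaped set `Ω_k^h(z₀,λ)`. -/
def ringSet {N : ℕ} (d : Vec N → Vec N → ℝ) (S Ω : Set (Vec N × ℝ)) (z₀ : Vec N × ℝ)
    (lam : ℝ) (k h : ℤ) : Set (Vec N × ℝ) :=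
  {ζ ∈ S \ Ω | lam ^ (k + 1) ≤ z₀.2 - ζ.2 ∧ z₀.2 - ζ.2 ≤ lam ^ k ∧
    (1 / lam) ^ (h - 1) ≤ Real.exp (d z₀.1 ζ.1 ^ 2 / (z₀.2 - ζ.2)) ∧
    Real.exp (d z₀.1 ζ.1 ^ 2 / (z₀.2 - ζ.2)) ≤ (1 / lam) ^ h ∧
    pdist d z₀ ζ ≤ Real.sqrt lam}

/-- The set `D_k^h(z₀,λ)`. -/
def DSet {N : ℕ} (d : Vec N → Vec N → ℝ) (S Ω : Set (Vec N × ℝ)) (z₀ : Vec N × ℝ)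
    (lam : ℝ) (k h : ℤ) : Set (Vec N × ℝ) :=
  {ζ ∈ S \ Ω | lam ^ (k + 1) ≤ z₀.2 - ζ.2 ∧ z₀.2 - ζ.2 ≤ lam ^ k ∧
    Real.exp (d z₀.1 ζ.1 ^ 2 / (z₀.2 - ζ.2)) ≤ (1 / lam) ^ h ∧
    pdist d z₀ ζ ≤ Real.sqrt lam}

/-- The Wiener-type series `z_a^b(λ;s)`. -/
def zSeries {N : ℕ} (d : Vec N → Vec N → ℝ) (S Ω : Set (Vec N × ℝ)) (z₀ : Vec N × ℝ)
    (a b lam s : ℝ) : ℝ≥0∞ :=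
  ∑' k : ℕ, ∑' h : ℕ,
    if 1 ≤ k ∧ (k : ℝ) ≤ s ∧ 1 ≤ h then
      ENNReal.ofReal (lam ^ (b * (h : ℝ))) *
        capac S (gaussK d a) (DSet d S Ω z₀ lam (k : ℤ) (h : ℤ)) /
        volume (dBall d z₀.1 (lam ^ ((k : ℝ) / 2)))
    else 0

/-- The section `E_λ(ρ,τ)`. -/
def Eset {N : ℕ} (d : Vec N → Vec N → ℝ) (S Ω : Set (Vec N × ℝ)) (z₀ : Vec N × ℝ)
    (lam ρ τ : ℝ) : Set (Vec N) :=
  {x | (x, τ) ∈ S \ Ω ∧ pdist d z₀ (x, τ) ≤ Real.sqrt lam ∧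
    Real.exp (d z₀.1 x ^ 2 / (z₀.2 - τ)) ≤ ρ}

end

set_option maxHeartbeats 1000000 in
/-- Gaussian capacity of closed parabolic balls is controlled by the volume of the
corresponding `d`-ball: every admissible Radon measure for `C_a` on `closure B̂(z₀,r)`
has total mass at most `C·|B(x₀,r)|`, provided `B̂(z₀,(1+θ)r) ⊆ S`. -/
theorem stmt0 (a θ cd : ℝ) (ha : 0 < a) (hθ : 0 < θ) (hcd : 1 < cd) :
    ∃ C : ℝ, 0 < C ∧
      ∀ (N : ℕ), 1 ≤ N → ∀ d : Vec N → Vec N → ℝ, GoodMetric d → Doubling d cd →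
      ∀ T₁ T₂ : EReal, T₁ < T₂ →
      ∀ z₀ : Vec N × ℝ, z₀ ∈ strip N T₁ T₂ →
      ∀ r : ℝ, 0 < r → pBall d z₀ ((1 + θ) * r) ⊆ strip N T₁ T₂ →
      (∀ μ : Measure (Vec N × ℝ), μ.InnerRegular → IsLocallyFiniteMeasure μ →
          μ (closure (pBall d z₀ r))ᶜ = 0 →
          (∀ z ∈ strip N T₁ T₂, ∫⁻ ζ, gaussK d a z ζ ∂μ ≤ 1) →
          μ (closure (pBall d z₀ r)) ≤ ENNReal.ofReal C * volume (dBall d z₀.1 r)) ∧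
      capac (strip N T₁ T₂) (gaussK d a) (closure (pBall d z₀ r)) ≤
        ENNReal.ofReal C * volume (dBall d z₀.1 r) := by
  have hm0 : 0 < min θ 1 := lt_min hθ one_pos
  set m := min θ 1 with hmdef
  refine ⟨cd * Real.exp (a / m), mul_pos (lt_trans one_pos hcd) (Real.exp_pos _), ?_⟩
  intro N hN d gm hdoub T₁ T₂ hT z₀ hz₀ r hr hsub
  set x₀ := z₀.1 with hx₀
  set t₀ := z₀.2 with ht₀
  set V := volume (dBall d x₀ r) with hV
  set F := closure (pBall d z₀ r) with hFdef
  set s : ℝ := (1 + m) * r ^ 2 with hsdef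
  have hs0 : 0 < s := by positivity
  set z : Vec N × ℝ := (x₀, t₀ + s) with hzdef
  -- pdist from z₀ to z is √s
  have hdxx : d x₀ x₀ = 0 := (gm.eq_zero_iff x₀ x₀).mpr rfl
  have hpz : pdist d z₀ z = Real.sqrt s := by
    have h1 : pdist d z₀ z = (s ^ 2 : ℝ) ^ (1 / 4 : ℝ) := by
      simp only [pdist, hzdef, ← hx₀, ← ht₀, hdxx]
      norm_num
    rw [h1, ← Real.rpow_natCast s 2, ← Real.rpow_mul hs0.le, Real.sqrt_eq_rpow]
    norm_num
  -- z lies in the bigger parabolic ball, hence in the strip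
  have hzball : z ∈ pBall d z₀ ((1 + θ) * r) := by
    have h1 : Real.sqrt s < (1 + θ) * r := by
      have h2 : s < ((1 + θ) * r) ^ 2 := by
        have hmθ : m ≤ θ := min_le_left _ _
        have : (1 + θ) ^ 2 = 1 + 2 * θ + θ ^ 2 := by ring
        nlinarith [sq_nonneg θ, sq_nonneg r, mul_pos hθ (mul_pos hr hr)]
      have := Real.sqrt_lt_sqrt hs0.le h2
      rwa [Real.sqrt_sq (by positivity)] at this
    simpa [pBall, hpz] using h1
  have hzstrip : z ∈ strip N T₁ T₂ := hsub hzball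
  -- points of F satisfy d x₀ ξ ≤ r and |t₀ - τ| ≤ r²
  have hFbox : F ⊆ {ζ : Vec N × ℝ | d x₀ ζ.1 ≤ r ∧ |t₀ - ζ.2| ≤ r ^ 2} := by
    apply closure_minimal
    · intro ζ hζ
      have hp : pdist d z₀ ζ < r := hζ
      set A : ℝ := d x₀ ζ.1 ^ 4 + (t₀ - ζ.2) ^ 2 with hA
      have hA0 : 0 ≤ A := by positivity
      have hAr : A ≤ r ^ 4 := by
        have h1 : A = (A ^ (1 / 4 : ℝ)) ^ (4 : ℕ) := by
          rw [← Real.rpow_natCast (A ^ (1 / 4 : ℝ)) 4, ← Real.rpow_mul hA0]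
          norm_num
        have h2 : (A ^ (1 / 4 : ℝ)) ^ (4 : ℕ) ≤ r ^ 4 :=
          pow_le_pow_left₀ (Real.rpow_nonneg hA0 _) hp.le 4
        linarith [h1 ▸ h2]
      constructor
      · have h3 : d x₀ ζ.1 ^ 4 ≤ r ^ 4 := by nlinarith [sq_nonneg (t₀ - ζ.2)]
        exact (pow_le_pow_iff_left₀ (gm.nonneg _ _) hr.le (by norm_num)).mp h3
      · have h3 : (t₀ - ζ.2) ^ 2 ≤ (r ^ 2) ^ 2 := by nlinarith [pow_nonneg (gm.nonneg x₀ ζ.1) 4]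
        have := Real.sqrt_le_sqrt h3
        rwa [Real.sqrt_sq_eq_abs, Real.sqrt_sq (by positivity)] at this
    · have hc1 : Continuous fun ζ : Vec N × ℝ => d x₀ ζ.1 :=
        gm.cont.comp (continuous_const.prodMk continuous_fst)
      rw [Set.setOf_and]
      exact (isClosed_le hc1 continuous_const).inter
        (isClosed_le ((continuous_const.sub continuous_snd).abs) continuous_const)
  -- basic volume facts
  have hV0 : V ≠ 0 := by
    have hopen : IsOpen (dBall d x₀ r) := by
      have : Continuous fun y : Vec N => d x₀ y :=
        gm.cont.comp (continuous_const.prodMk continuous_id)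
      exact isOpen_Iio.preimage this
    have hne : (dBall d x₀ r).Nonempty := ⟨x₀, by simpa [dBall, hdxx] using hr⟩
    exact (hopen.measure_pos volume hne).ne'
  have hVtop : V ≠ ⊤ := (gm.bounded x₀ r).measure_lt_top.ne
  -- kernel lower bound on F
  set c : ℝ≥0∞ := (ENNReal.ofReal cd * V)⁻¹ * ENNReal.ofReal (Real.exp (-(a / m))) with hcdef
  have hker : ∀ ζ ∈ F, c ≤ gaussK d a z ζ := by
    intro ζ hζ
    obtain ⟨hd, hτ⟩ := hFbox hζ
    set Δ : ℝ := z.2 - ζ.2 with hΔdef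
    have hΔeq : Δ = s + (t₀ - ζ.2) := by simp [hΔdef, hzdef]; ring
    have habs := abs_le.mp hτ
    have hΔlow : m * r ^ 2 ≤ Δ := by rw [hΔeq, hsdef]; nlinarith
    have hΔ0 : 0 < Δ := lt_of_lt_of_le (by positivity) hΔlow
    have hζz : ζ.2 < z.2 := by simpa [hΔdef] using hΔ0
    have hgauss : gaussK d a z ζ =
        (volume (dBall d x₀ (Real.sqrt Δ)))⁻¹ *
          ENNReal.ofReal (Real.exp (-a * d x₀ ζ.1 ^ 2 / Δ)) := by
      simp only [gaussK, if_pos hζz]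
      rfl
    rw [hgauss]
    have hvol : volume (dBall d x₀ (Real.sqrt Δ)) ≤ ENNReal.ofReal cd * V := by
      have hΔhi : Δ ≤ (2 * r) ^ 2 := by rw [hΔeq, hsdef]; nlinarith [min_le_right θ 1]
      have hsqrt : Real.sqrt Δ ≤ 2 * r := by
        have := Real.sqrt_le_sqrt hΔhi
        rwa [Real.sqrt_sq (by positivity)] at this
      have hss : dBall d x₀ (Real.sqrt Δ) ⊆ dBall d x₀ (2 * r) :=
        fun y hy => lt_of_lt_of_le hy hsqrt
      exact (measure_mono hss).trans (hdoub x₀ r hr)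
    have hexp : ENNReal.ofReal (Real.exp (-(a / m))) ≤
        ENNReal.ofReal (Real.exp (-a * d x₀ ζ.1 ^ 2 / Δ)) := by
      apply ENNReal.ofReal_le_ofReal
      apply Real.exp_le_exp.mpr
      have hnum : a * d x₀ ζ.1 ^ 2 ≤ a * r ^ 2 := by
        have : d x₀ ζ.1 ^ 2 ≤ r ^ 2 := pow_le_pow_left₀ (gm.nonneg _ _) hd 2
        nlinarith
      have hquot : a * d x₀ ζ.1 ^ 2 / Δ ≤ a * r ^ 2 / (m * r ^ 2) :=
        div_le_div₀ (by positivity) hnum (by positivity) hΔlow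
      have heq : a * r ^ 2 / (m * r ^ 2) = a / m := by
        field_simp
      have : a * d x₀ ζ.1 ^ 2 / Δ ≤ a / m := heq ▸ hquot
      have hrw : -a * d x₀ ζ.1 ^ 2 / Δ = -(a * d x₀ ζ.1 ^ 2 / Δ) := by ring
      rw [hrw]
      linarith
    exact mul_le_mul' (ENNReal.inv_le_inv.mpr hvol) hexp
  -- the main estimate
  have key : ∀ μ : Measure (Vec N × ℝ), μ.InnerRegular → IsLocallyFiniteMeasure μ →
      μ Fᶜ = 0 →
      (∀ w ∈ strip N T₁ T₂, ∫⁻ ζ, gaussK d a w ζ ∂μ ≤ 1) →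
      μ F ≤ ENNReal.ofReal (cd * Real.exp (a / m)) * V := by
    intro μ _ _ _ hpot
    have hint : c * μ F ≤ 1 := by
      have h1 : ∫⁻ ζ, F.indicator (fun _ => c) ζ ∂μ ≤ ∫⁻ ζ, gaussK d a z ζ ∂μ := by
        apply lintegral_mono
        intro ζ
        by_cases hζ : ζ ∈ F
        · simpa [Set.indicator_of_mem hζ] using hker ζ hζ
        · simp [Set.indicator_of_notMem hζ]
      rw [lintegral_indicator isClosed_closure.measurableSet, setLIntegral_const] at h1
      calc c * μ F = c * μ F := rfl
        _ ≤ ∫⁻ ζ, gaussK d a z ζ ∂μ := by rw [mul_comm] at h1 ⊢; exact h1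
        _ ≤ 1 := hpot z hzstrip
    have hcd0 : ENNReal.ofReal cd ≠ 0 := (ENNReal.ofReal_pos.mpr (by linarith)).ne'
    have he0 : ENNReal.ofReal (Real.exp (-(a / m))) ≠ 0 :=
      (ENNReal.ofReal_pos.mpr (Real.exp_pos _)).ne'
    have hXne : ENNReal.ofReal cd * V ≠ 0 := mul_ne_zero hcd0 hV0
    have hXtop : ENNReal.ofReal cd * V ≠ ⊤ := ENNReal.mul_ne_top ENNReal.ofReal_ne_top hVtop
    have hμc : μ F ≤ c⁻¹ := ENNReal.le_inv_iff_mul_le.mpr (by rwa [mul_comm] at hint)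
    refine hμc.trans ?_
    have hcinv : c⁻¹ = (ENNReal.ofReal cd * V) * (ENNReal.ofReal (Real.exp (-(a / m))))⁻¹ := by
      rw [hcdef, ENNReal.mul_inv (Or.inr ENNReal.ofReal_ne_top)
        (Or.inr he0), inv_inv]
    rw [hcinv, ← ENNReal.ofReal_inv_of_pos (Real.exp_pos _), ← Real.exp_neg, neg_neg,
      ENNReal.ofReal_mul (by linarith : (0:ℝ) ≤ cd)]
    ring_nf
    exact le_refl _
  refine ⟨key, ?_⟩
  exact iSup_le fun μ => iSup_le fun hμ => key μ hμ.1 hμ.2.1 hμ.2.2.1 hμ.2.2.2
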